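/- With the Bernoulli-sequence model and an integer n₁ ≥ 1, the expected number of referred uncles per selfish-mining attack cycle is E[U] = q − q^{n₁+1}; equivalently, μ( {X_0 = S} ∩ {there exists i with 1 ≤ i ≤ n₁ and X_i = H} ) = q − q^{n₁+1}. -/

import Mathlib

open MeasureTheory ENNReal
open scoped BigOperators

/-- Blocks are labelled by `Bool`: `true` = `S` (attacker block), `false` = `H`
(honest block). The expected number of referred uncles per selfish-mining attack cycle
is `E[U] = q - q^(n₁+1)`: the event `{U = 1}` is
`{X_0 = S} ∩ {∃ i, 1 ≤ i ≤ n₁, X_i = H}`. -/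
theorem expected_referred_uncles (q p : ℝ) (hq0 : 0 < q) (hq : q < 1 / 2)
    (hp : p = 1 - q) (n₁ : ℕ) (hn₁ : 1 ≤ n₁)
    (μ : Measure (ℕ → Bool)) [IsProbabilityMeasure μ]
    (hμ : ∀ (n : ℕ) (w : Fin n → Bool),
      μ {ω | ∀ i : Fin n, ω i = w i} =
        ∏ i : Fin n, (if w i then ENNReal.ofReal q else ENNReal.ofReal p)) :
    μ ({ω | ω 0 = true} ∩ {ω | ∃ i, 1 ≤ i ∧ i ≤ n₁ ∧ ω i = false}) =
      ENNReal.ofReal (q - q ^ (n₁ + 1)) := by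
  set A : Set (ℕ → Bool) := {ω | ω 0 = true}
  set C : Set (ℕ → Bool) := {ω | ∀ i : Fin (n₁ + 1), ω i = true}
  have hA : μ A = ENNReal.ofReal q := by
    have := hμ 1 (fun _ => true)
    simp only [Finset.prod_const, if_true] at this
    have hset : {ω : ℕ → Bool | ∀ i : Fin 1, ω i = (fun _ => true) i} = A := by
      ext ω
      constructor
      · intro h; exact h 0
      · intro h i
        have : (i : ℕ) = 0 := by omega
        simpa [this, A] using h
    rw [hset] at this
    simpa using this
  have hC : μ C = ENNReal.ofReal q ^ (n₁ + 1) := by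
    have := hμ (n₁ + 1) (fun _ => true)
    simpa [Finset.prod_const] using this
  have hCA : C ⊆ A := by
    intro ω hω
    exact hω ⟨0, Nat.succ_pos _⟩
  have hCm : MeasurableSet C := by
    have : C = ⋂ i : Fin (n₁ + 1), {ω : ℕ → Bool | ω i = true} := by
      ext ω; simp [C, Set.mem_iInter]
    rw [this]
    refine MeasurableSet.iInter fun i => ?_
    have : {ω : ℕ → Bool | ω (i : ℕ) = true} = (fun ω : ℕ → Bool => ω (i : ℕ)) ⁻¹' {true} := by
      ext ω; simp
    rw [this]
    exact measurable_pi_apply (i : ℕ) (MeasurableSet.singleton true)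
  have hsets : A ∩ {ω | ∃ i, 1 ≤ i ∧ i ≤ n₁ ∧ ω i = false} = A \ C := by
    ext ω
    constructor
    · rintro ⟨h0, i, hi1, hin, hif⟩
      refine ⟨h0, fun hC' => ?_⟩
      have := hC' ⟨i, by omega⟩
      simp at this
      rw [this] at hif
      exact Bool.true_eq_false.mp hif
    · rintro ⟨h0, hnC⟩
      refine ⟨h0, ?_⟩
      by_contra hne
      simp only [Set.mem_setOf_eq, not_exists, not_and] at hne
      apply hnC
      intro i
      rcases Nat.eq_zero_or_pos (i : ℕ) with h | h
      · simpa [h, A] using h0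
      · by_contra hb
        have : ω (i : ℕ) = false := by
          cases hw : ω (i : ℕ) with
          | false => rfl
          | true => exact absurd hw hb
        exact absurd this (hne (i : ℕ) h (by omega))
  rw [hsets, measure_diff hCA hCm.nullMeasurableSet (by rw [hC]; exact ENNReal.pow_ne_top ENNReal.ofReal_ne_top),
    hA, hC]
  rw [← ENNReal.ofReal_pow hq0.le]
  rw [← ENNReal.ofReal_sub _ (pow_nonneg hq0.le _)]
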